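/- Let A be symmetric, b ∈ ℝ^d, ρ > 0, f(x) = (1/2)xᵀAx + bᵀx + (ρ/3)‖x‖³ with global minimizer s, and A_⋆ = A + ρ‖s‖I. For any x and one gradient step x⁺ = x − η∇f(x) with 0 < η ≤ 1/(4(β + ρR_ρ)) where β ≥ ‖A‖_op and R_ρ ≥ ‖s‖, ‖x‖: ‖x⁺ − s‖² ≤ (1 − (η/2)[3λ_min + ρ(‖s‖ + 2‖x‖)])‖x − s‖² − ηρ(‖s‖ − ‖x‖)²‖s‖. In particular, if ρ‖x‖ ≥ −λ_min − (1/2)(ρ‖s‖ + λ_min) + μ for μ ≥ 0, then ‖x⁺ − s‖² ≤ (1 − ημ)‖x − s‖². -/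

import Mathlib

open Matrix

noncomputable def eNorm {d : ℕ} (x : Fin d → ℝ) : ℝ := Real.sqrt (x ⬝ᵥ x)

lemma dot_self_nonneg {d : ℕ} (v : Fin d → ℝ) : 0 ≤ v ⬝ᵥ v := by
  apply Finset.sum_nonneg; intro i _; exact mul_self_nonneg _

lemma eNorm_sq {d : ℕ} (v : Fin d → ℝ) : eNorm v ^ 2 = v ⬝ᵥ v :=
  Real.sq_sqrt (dot_self_nonneg v)

lemma eNorm_nonneg {d : ℕ} (v : Fin d → ℝ) : 0 ≤ eNorm v := Real.sqrt_nonneg _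

lemma dot_cs {d : ℕ} (a b : Fin d → ℝ) : (a ⬝ᵥ b) ^ 2 ≤ (a ⬝ᵥ a) * (b ⬝ᵥ b) := by
  have h := Finset.sum_mul_sq_le_sq_mul_sq Finset.univ a b
  simpa [dotProduct, sq] using h

lemma dot_le_eNorm {d : ℕ} (a b : Fin d → ℝ) : a ⬝ᵥ b ≤ eNorm a * eNorm b := by
  calc a ⬝ᵥ b ≤ |a ⬝ᵥ b| := le_abs_self _
    _ = Real.sqrt ((a ⬝ᵥ b) ^ 2) := (Real.sqrt_sq_eq_abs _).symm
    _ ≤ Real.sqrt ((a ⬝ᵥ a) * (b ⬝ᵥ b)) := Real.sqrt_le_sqrt (dot_cs a b)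
    _ = eNorm a * eNorm b := by
        rw [eNorm, eNorm, ← Real.sqrt_mul (dot_self_nonneg a)]

lemma eNorm_pos {d : ℕ} {v : Fin d → ℝ} (hv : v ≠ 0) : 0 < eNorm v := by
  have h : 0 < v ⬝ᵥ v := by
    rcases Function.ne_iff.mp hv with ⟨i, hi⟩
    have : (0:ℝ) < v i * v i := mul_self_pos.mpr hi
    have hle : v i * v i ≤ v ⬝ᵥ v := by
      apply Finset.single_le_sum (f := fun j => v j * v j)
      · intro j _; exact mul_self_nonneg _
      · exact Finset.mem_univ i
    linarith
  exact Real.sqrt_pos.mpr h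

/-- semi-inner-product Cauchy-Schwarz for a psd symmetric matrix -/
lemma psd_cs {d : ℕ} {M : Matrix (Fin d) (Fin d) ℝ} (hsymm : M.IsSymm)
    (hpsd : ∀ w : Fin d → ℝ, 0 ≤ w ⬝ᵥ M.mulVec w) (a b : Fin d → ℝ) :
    (a ⬝ᵥ M.mulVec b) ^ 2 ≤ (a ⬝ᵥ M.mulVec a) * (b ⬝ᵥ M.mulVec b) := by
  have hmove : ∀ v w : Fin d → ℝ, v ⬝ᵥ M.mulVec w = w ⬝ᵥ M.mulVec v := by
    intro v w
    rw [dotProduct_mulVec, ← mulVec_transpose, hsymm.eq, dotProduct_comm]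
  set α := a ⬝ᵥ M.mulVec a
  set B := b ⬝ᵥ M.mulVec b
  set γ := a ⬝ᵥ M.mulVec b
  have h1 : 0 ≤ (B • a - γ • b) ⬝ᵥ M.mulVec (B • a - γ • b) := hpsd _
  have h2 : 0 ≤ (a + b) ⬝ᵥ M.mulVec (a + b) := hpsd _
  have h3 : 0 ≤ (a - b) ⬝ᵥ M.mulVec (a - b) := hpsd _
  have hba : b ⬝ᵥ M.mulVec a = γ := (hmove b a)
  have e1 : (B • a - γ • b) ⬝ᵥ M.mulVec (B • a - γ • b)
      = B * B * α - 2 * B * γ * γ + γ * γ * B := by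
    simp only [mulVec_sub, Matrix.mulVec_smul, sub_dotProduct, dotProduct_sub,
      smul_dotProduct, dotProduct_smul, smul_eq_mul]
    rw [hba]; simp only [α, B, γ]; ring
  have e2 : (a + b) ⬝ᵥ M.mulVec (a + b) = α + 2 * γ + B := by
    simp only [mulVec_add, add_dotProduct, dotProduct_add]
    rw [hba]; simp only [α, B, γ]; ring
  have e3 : (a - b) ⬝ᵥ M.mulVec (a - b) = α - 2 * γ + B := by
    simp only [mulVec_sub, sub_dotProduct, dotProduct_sub]
    rw [hba]; simp only [α, B, γ]; ring
  have hα : 0 ≤ α := hpsd a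
  have hB : 0 ≤ B := hpsd b
  rw [e1] at h1; rw [e2] at h2; rw [e3] at h3
  have h4 : 0 ≤ (γ • a - α • b) ⬝ᵥ M.mulVec (γ • a - α • b) := hpsd _
  have e4 : (γ • a - α • b) ⬝ᵥ M.mulVec (γ • a - α • b)
      = -(γ * γ * α) + α * α * B := by
    simp only [mulVec_sub, Matrix.mulVec_smul, sub_dotProduct, dotProduct_sub,
      smul_dotProduct, dotProduct_smul, smul_eq_mul]
    rw [hba]; simp only [α, B, γ]; ring
  have h5 : 0 ≤ (a - γ • b) ⬝ᵥ M.mulVec (a - γ • b) := hpsd _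
  have e5 : (a - γ • b) ⬝ᵥ M.mulVec (a - γ • b) = α - 2 * (γ * γ) + γ * γ * B := by
    simp only [mulVec_sub, Matrix.mulVec_smul, sub_dotProduct, dotProduct_sub,
      smul_dotProduct, dotProduct_smul, smul_eq_mul]
    rw [hba]; simp only [α, B, γ]; ring
  rw [e4] at h4; rw [e5] at h5
  rcases eq_or_lt_of_le hB with hB0 | hB0
  · have hg4 : γ ^ 2 * γ ^ 2 ≤ 0 := by nlinarith [mul_nonneg (sq_nonneg γ) h5]
    have hg : γ ^ 2 ≤ 0 := by nlinarith [sq_nonneg γ]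
    nlinarith [sq_nonneg γ]
  · nlinarith [sq_nonneg γ]
set_option maxHeartbeats 1000000 in
theorem stmt_15 {d : ℕ} (A : Matrix (Fin d) (Fin d) ℝ) (hA : A.IsSymm)
    (lmin : ℝ)
    (hmin : ∀ y, lmin * (y ⬝ᵥ y) ≤ y ⬝ᵥ A.mulVec y)
    (hex : ∃ v : Fin d → ℝ, v ≠ 0 ∧ A.mulVec v = lmin • v)
    (b : Fin d → ℝ) (ρ : ℝ) (hρ : 0 < ρ)
    (s : Fin d → ℝ)
    (hstat : (A + (ρ * eNorm s) • (1 : Matrix (Fin d) (Fin d) ℝ)).mulVec s + b = 0)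
    (hpsd : (A + (ρ * eNorm s) • (1 : Matrix (Fin d) (Fin d) ℝ)).PosSemidef)
    (hglob : ∀ y, (1/2) * (s ⬝ᵥ A.mulVec s) + b ⬝ᵥ s + (ρ/3) * eNorm s ^ 3
      ≤ (1/2) * (y ⬝ᵥ A.mulVec y) + b ⬝ᵥ y + (ρ/3) * eNorm y ^ 3)
    (β Rρ : ℝ)
    (hop : ∀ y, eNorm (A.mulVec y) ≤ β * eNorm y)
    (x : Fin d → ℝ)
    (hRs : eNorm s ≤ Rρ) (hRx : eNorm x ≤ Rρ)
    (η : ℝ) (hη0 : 0 < η) (hη : η ≤ 1 / (4 * (β + ρ * Rρ)))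
    (xp : Fin d → ℝ)
    (hxp : xp = x - η • (A.mulVec x + b + (ρ * eNorm x) • x)) :
    eNorm (xp - s) ^ 2 ≤
      (1 - (η / 2) * (3 * lmin + ρ * (eNorm s + 2 * eNorm x))) * eNorm (x - s) ^ 2
      - η * ρ * (eNorm s - eNorm x) ^ 2 * eNorm s ∧
    ∀ μ : ℝ, 0 ≤ μ → ρ * eNorm x ≥ -lmin - (1/2) * (ρ * eNorm s + lmin) + μ →
      eNorm (xp - s) ^ 2 ≤ (1 - η * μ) * eNorm (x - s) ^ 2 := by
  clear hglob
  set σ := eNorm s with hσdef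
  set χ := eNorm x with hχdef
  set M := A + (ρ * σ) • (1 : Matrix (Fin d) (Fin d) ℝ) with hMdef
  set u := x - s with hudef
  set G := A.mulVec x + b + (ρ * χ) • x with hGdef
  have hσ0 : 0 ≤ σ := eNorm_nonneg s
  have hχ0 : 0 ≤ χ := eNorm_nonneg x
  have hxx : x ⬝ᵥ x = χ ^ 2 := (eNorm_sq x).symm
  have hss : s ⬝ᵥ s = σ ^ 2 := (eNorm_sq s).symm
  have hβ0 : 0 ≤ β := by
    obtain ⟨v, hv, -⟩ := hex
    have h1 := hop v
    have h2 := eNorm_pos hv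
    have h3 := eNorm_nonneg (A.mulVec v)
    nlinarith
  have hL : 0 < 4 * (β + ρ * Rρ) := by
    by_contra h
    push_neg at h
    have : (1:ℝ) / (4 * (β + ρ * Rρ)) ≤ 0 :=
      div_nonpos_of_nonneg_of_nonpos zero_le_one h
    linarith
  have hηL : η * (β + ρ * Rρ) ≤ 1/4 := by
    have h1 : η * (4 * (β + ρ * Rρ)) ≤ 1 := (le_div_iff₀ hL).mp hη
    linarith
  have hc1 : η * (β + ρ * σ) ≤ 1/4 := by
    nlinarith [mul_nonneg (mul_nonneg hη0.le hρ.le) (sub_nonneg.mpr hRs)]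
  have hc2 : η * (ρ * χ) ≤ 1/4 := by
    nlinarith [mul_nonneg (mul_nonneg hη0.le hρ.le) (sub_nonneg.mpr hRx),
      mul_nonneg hη0.le hβ0]
  -- vector identities
  have hb : b = -(M.mulVec s) := eq_neg_of_add_eq_zero_right hstat
  have hG2 : G = M.mulVec u + (ρ * (χ - σ)) • x := by
    rw [hGdef, hb, hMdef, hudef]
    funext i
    simp [Matrix.mulVec_sub, Matrix.add_mulVec, Matrix.smul_mulVec,
      Matrix.one_mulVec, Pi.add_apply, Pi.sub_apply, Pi.smul_apply, smul_eq_mul,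
      Pi.neg_apply]
    ring
  set N := u ⬝ᵥ u with hNdef
  set P := u ⬝ᵥ M.mulVec u with hPdef
  set W := M.mulVec u ⬝ᵥ M.mulVec u with hWdef
  set C := M.mulVec u ⬝ᵥ x with hCdef
  set D := u ⬝ᵥ x with hDdef
  have hNeq : eNorm u ^ 2 = N := eNorm_sq u
  have hEN : eNorm (xp - s) ^ 2 = N - 2*η*(u ⬝ᵥ G) + η^2 * (G ⬝ᵥ G) := by
    have hxps : xp - s = u - η • G := by rw [hxp, hudef]; abel
    rw [eNorm_sq, hxps]
    simp only [sub_dotProduct, dotProduct_sub, smul_dotProduct, dotProduct_smul,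
      smul_eq_mul, dotProduct_comm G u]
    ring
  have huG : u ⬝ᵥ G = P + ρ*(χ-σ)*D := by
    rw [hG2]
    simp only [dotProduct_add, dotProduct_smul, smul_eq_mul, hPdef, hDdef]
  have hGG : G ⬝ᵥ G = W + 2*(ρ*(χ-σ))*C + (ρ*(χ-σ))^2 * χ^2 := by
    rw [hG2]
    simp only [add_dotProduct, dotProduct_add, smul_dotProduct, dotProduct_smul,
      smul_eq_mul, dotProduct_comm x (M.mulVec u), hxx]
    ring
  have hD2 : 2*D = χ^2 - σ^2 + N := by
    rw [hDdef, hNdef, hudef]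
    simp only [sub_dotProduct, dotProduct_sub, dotProduct_comm s x, hxx, hss]
    ring
  -- scalar inequalities
  have hpsdQ : ∀ w, 0 ≤ w ⬝ᵥ M.mulVec w := by
    intro w
    have := hpsd.dotProduct_mulVec_nonneg w
    simpa using this
  have hP0 : 0 ≤ P := hpsdQ u
  have hN0 : 0 ≤ N := dot_self_nonneg u
  have hW0 : 0 ≤ W := dot_self_nonneg _
  have hMsymm : M.IsSymm := by
    rw [hMdef]
    exact hA.add ((Matrix.isSymm_one).smul _)
  have hMbound : ∀ w, w ⬝ᵥ M.mulVec w ≤ (β + ρ*σ) * (w ⬝ᵥ w) := by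
    intro w
    have h1 : w ⬝ᵥ A.mulVec w ≤ eNorm w * eNorm (A.mulVec w) := dot_le_eNorm _ _
    have h2 := hop w
    have h3 := eNorm_nonneg w
    have h4 : eNorm w ^ 2 = w ⬝ᵥ w := eNorm_sq w
    have h5 : w ⬝ᵥ M.mulVec w = w ⬝ᵥ A.mulVec w + ρ*σ*(w ⬝ᵥ w) := by
      rw [hMdef]
      simp only [Matrix.add_mulVec, Matrix.smul_mulVec, Matrix.one_mulVec,
        dotProduct_add, dotProduct_smul, smul_eq_mul]
    have h6 : eNorm w * eNorm (A.mulVec w) ≤ β * (w ⬝ᵥ w) := by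
      calc eNorm w * eNorm (A.mulVec w) ≤ eNorm w * (β * eNorm w) :=
            mul_le_mul_of_nonneg_left h2 h3
        _ = β * eNorm w ^ 2 := by ring
        _ = β * (w ⬝ᵥ w) := by rw [h4]
    rw [h5]
    linarith
  have hWP : W ≤ (β + ρ*σ) * P := by
    have hcs := psd_cs hMsymm hpsdQ u (M.mulVec u)
    have hmove : u ⬝ᵥ M.mulVec (M.mulVec u) = W := by
      rw [dotProduct_mulVec, ← mulVec_transpose, hMsymm.eq, hWdef]
    rw [hmove] at hcs
    have hb2 := hMbound (M.mulVec u)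
    have h0 := hpsdQ (M.mulVec u)
    rcases eq_or_lt_of_le hW0 with h | h
    · rw [← h]
      positivity
    · nlinarith [mul_le_mul_of_nonneg_left hb2 hP0]
  have hPl : (lmin + ρ*σ) * N ≤ P := by
    have h1 := hmin u
    have h2 : P = u ⬝ᵥ A.mulVec u + ρ*σ*N := by
      rw [hPdef, hMdef]
      simp only [Matrix.add_mulVec, Matrix.smul_mulVec, Matrix.one_mulVec,
        dotProduct_add, dotProduct_smul, smul_eq_mul, hNdef]
    rw [h2]
    nlinarith
  have hA1 : 0 ≤ W - 2*(ρ*(χ-σ))*C + (ρ*(χ-σ))^2 * χ^2 := by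
    have h := dot_self_nonneg (M.mulVec u - (ρ*(χ-σ)) • x)
    simp only [sub_dotProduct, dotProduct_sub, smul_dotProduct, dotProduct_smul,
      smul_eq_mul, dotProduct_comm x (M.mulVec u), hWdef, hCdef, hxx] at h
    nlinarith [h]
  have hstep : η * (G ⬝ᵥ G) ≤ (1/2)*P + (1/2)*(ρ*χ*(χ-σ)^2) := by
    rw [hGG]
    nlinarith [mul_nonneg hη0.le hA1,
      mul_le_mul_of_nonneg_left hWP hη0.le,
      mul_le_mul_of_nonneg_right hc1 hP0,
      mul_le_mul_of_nonneg_right hc2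
        (mul_nonneg (mul_nonneg hρ.le hχ0) (sq_nonneg (χ-σ)))]
  have main1 : eNorm (xp - s) ^ 2 ≤
      (1 - (η / 2) * (3 * lmin + ρ * (σ + 2 * χ))) * N - η * ρ * (σ - χ) ^ 2 * σ := by
    rw [hEN, huG]
    have H1 := mul_le_mul_of_nonneg_left hstep hη0.le
    have H2 := mul_le_mul_of_nonneg_left hPl hη0.le
    have H3 : 0 ≤ η*ρ*χ*(χ-σ)^2 :=
      mul_nonneg (mul_nonneg (mul_nonneg hη0.le hρ.le) hχ0) (sq_nonneg _)
    have H4 : η*ρ*(χ-σ)*(2*D) = η*ρ*(χ-σ)*(χ^2 - σ^2 + N) := by rw [hD2]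
    linarith [H1, H2, H3, H4]
  constructor
  · rw [hNeq]
    exact main1
  · intro μ hμ0 hcond
    rw [hNeq]
    have hc : (0:ℝ) ≤ 3*lmin + ρ*σ + 2*(ρ*χ) - 2*μ := by linarith
    have H := mul_nonneg (mul_nonneg hη0.le hN0) hc
    have Hσ : 0 ≤ η*ρ*σ*(σ-χ)^2 :=
      mul_nonneg (mul_nonneg (mul_nonneg hη0.le hρ.le) hσ0) (sq_nonneg _)
    linarith [main1, H, Hσ]
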